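/- For every odd m ≥ 3, setting n = m(m+1)/2, there exists a subgroup K of H = (Z_2)^{n+1}/⟨(1,...,1)⟩ with H/K ≅ (Z_2)^m such that K contains no nontrivial element of the form φ_k or φ_iφ_j. -/

import Mathlib

open scoped BigOperators

/-- Vectors of length `n+1` over `ZMod p`. -/
abbrev GFVec (p n : ℕ) := Fin (n + 1) → ZMod p

/-- The subgroup generated by the constant vector `(1,...,1)`. -/
def diagSub (p n : ℕ) : AddSubgroup (GFVec p n) :=
  AddSubgroup.zmultiples (fun _ => (1 : ZMod p))

/-- The group `H = (Z_p)^{n+1} / ⟨(1,...,1)⟩`. -/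
abbrev GFGroup (p n : ℕ) := GFVec p n ⧸ diagSub p n

/-- The canonical generator `φ_i`, the image of the `i`-th standard basis vector. -/
def gen (p n : ℕ) (i : Fin (n + 1)) : GFGroup p n :=
  QuotientAddGroup.mk (Pi.single i (1 : ZMod p))

/-- An element of `H` is forbidden (acts with fixed points) if it is a nontrivial-looking
product `φ_{i_1}^{l_1} ⋯ φ_{i_j}^{l_j}` with `1 ≤ j ≤ d`, distinct indices and
exponents `l_t ≢ 0 (mod p)`. -/
def IsForbidden (p n d : ℕ) (x : GFGroup p n) : Prop :=
  ∃ (s : Finset (Fin (n + 1))) (l : Fin (n + 1) → ZMod p),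
    s.Nonempty ∧ s.card ≤ d ∧ (∀ i ∈ s, l i ≠ 0) ∧
    x = QuotientAddGroup.mk (fun i => if i ∈ s then l i else 0)

section MyAux

/-- All 2-element subsets of `Fin m`. -/
def pairsP (m : ℕ) : Finset (Finset (Fin m)) := Finset.powersetCard 2 Finset.univ

/-- Index type: singletons ⊕ pairs ⊕ the all-ones. -/
abbrev IdxT (m : ℕ) := (Fin m ⊕ {s // s ∈ pairsP m}) ⊕ Unit

/-- Indicator vector of a set. -/
def chi (m : ℕ) (s : Finset (Fin m)) : Fin m → ZMod 2 := fun i => if i ∈ s then 1 else 0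

def g0 (m : ℕ) : IdxT m → Finset (Fin m)
  | .inl (.inl i) => {i}
  | .inl (.inr s) => s.1
  | .inr _ => Finset.univ

lemma chi_inj (m : ℕ) : Function.Injective (chi m) := by
  intro s t h
  ext i
  have h' := congrFun h i
  simp only [chi] at h'
  by_cases hs : i ∈ s <;> by_cases ht : i ∈ t <;> simp_all

lemma chi_ne_zero (m : ℕ) {s : Finset (Fin m)} (hs : s.Nonempty) : chi m s ≠ 0 := by
  obtain ⟨i, hi⟩ := hs
  intro h
  have := congrFun h i
  simp [chi, hi] at this

lemma card_of_mem_pairsP {m : ℕ} {s : Finset (Fin m)} (h : s ∈ pairsP m) : s.card = 2 :=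
  (Finset.mem_powersetCard.mp h).2

lemma g0_inj (m : ℕ) (hm : 3 ≤ m) : Function.Injective (g0 m) := by
  have hcard : ∀ x : IdxT m, (g0 m x).card =
      Sum.elim (Sum.elim (fun _ => 1) (fun _ => 2)) (fun _ => m) x := by
    rintro ((i | s) | u)
    · simp [g0]
    · simpa [g0] using card_of_mem_pairsP s.2
    · simp [g0, Finset.card_univ]
  rintro ((i | s) | u) ((j | t) | v) h
  · have : ({i} : Finset (Fin m)) = {j} := h
    simpa using this
  · have := (hcard _).symm.trans ((congrArg Finset.card h).trans (hcard _))
    simp at this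
  · have := (hcard _).symm.trans ((congrArg Finset.card h).trans (hcard _))
    simp at this; omega
  · have := (hcard _).symm.trans ((congrArg Finset.card h).trans (hcard _))
    simp at this
  · have : s.1 = t.1 := h
    exact congrArg (fun x => (Sum.inl (Sum.inr x) : IdxT m)) (Subtype.ext this)
  · have := (hcard _).symm.trans ((congrArg Finset.card h).trans (hcard _))
    simp at this; omega
  · have := (hcard _).symm.trans ((congrArg Finset.card h).trans (hcard _))
    simp at this; omega
  · have := (hcard _).symm.trans ((congrArg Finset.card h).trans (hcard _))
    simp at this; omega
  · simp

lemma filter_pairs_card (m : ℕ) (j : Fin m) :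
    ((pairsP m).filter (fun s => j ∈ s)).card = m - 1 := by
  have himg : (pairsP m).filter (fun s => j ∈ s)
      = (Finset.univ.erase j).image (fun i => ({j, i} : Finset (Fin m))) := by
    ext s
    simp only [Finset.mem_filter, pairsP, Finset.mem_powersetCard, Finset.mem_image,
      Finset.mem_erase, Finset.mem_univ, and_true]
    constructor
    · rintro ⟨⟨-, hcard⟩, hj⟩
      obtain ⟨a, b, hab, rfl⟩ := Finset.card_eq_two.mp hcard
      rcases Finset.mem_insert.mp hj with rfl | hb
      · exact ⟨b, Ne.symm hab, rfl⟩
      · have hjb : j = b := Finset.mem_singleton.mp hb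
        subst hjb
        exact ⟨a, hab, by rw [Finset.pair_comm]⟩
    · rintro ⟨i, hij, rfl⟩
      exact ⟨⟨Finset.subset_univ _, Finset.card_pair (Ne.symm hij)⟩, Finset.mem_insert_self _ _⟩
  rw [himg, Finset.card_image_of_injOn, Finset.card_erase_of_mem (Finset.mem_univ j),
    Finset.card_univ, Fintype.card_fin]
  intro a ha b hb h
  have ha' : a ≠ j := (Finset.mem_erase.mp ha).1
  have h' : ({j, a} : Finset (Fin m)) = {j, b} := h
  have ha2 : a ∈ ({j, b} : Finset (Fin m)) := by
    rw [← h']; exact Finset.mem_insert_of_mem (Finset.mem_singleton_self a)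
  rcases Finset.mem_insert.mp ha2 with h1 | h1
  · exact absurd h1 ha'
  · exact Finset.mem_singleton.mp h1

lemma sum_chi (m : ℕ) (hm : 3 ≤ m) (hodd : Odd m) :
    ∑ x : IdxT m, chi m (g0 m x) = 0 := by
  ext j
  rw [Finset.sum_apply, Fintype.sum_sum_type, Fintype.sum_sum_type]
  have h1 : ∑ i : Fin m, chi m (g0 m (.inl (.inl i))) j = 1 := by
    simp only [g0, chi, Finset.mem_singleton]
    rw [Finset.sum_ite_eq Finset.univ j (fun _ => (1 : ZMod 2))]
    simp
  have h2 : ∑ s : {s // s ∈ pairsP m}, chi m (g0 m (.inl (.inr s))) j = 0 := by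
    simp only [g0, chi]
    change (∑ s : {s // s ∈ pairsP m}, if j ∈ s.1 then (1 : ZMod 2) else 0) = 0
    rw [Finset.sum_coe_sort (pairsP m) (fun s => if j ∈ s then (1 : ZMod 2) else 0)]
    rw [Finset.sum_boole, filter_pairs_card]
    have : (2 : ℕ) ∣ m - 1 := by
      obtain ⟨k, hk⟩ := hodd; omega
    simpa using (ZMod.natCast_eq_zero_iff (m - 1) 2).mpr this
  have h3 : ∑ u : Unit, chi m (g0 m (.inr u)) j = 1 := by
    simp [g0, chi]
  rw [h1, h2, h3]
  simp
  decide

end MyAux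

section MyAux2

/-- The linear map `v ↦ ∑ k, v k • f k`. -/
def theta (m n : ℕ) (f : Fin (n+1) → (Fin m → ZMod 2)) :
    GFVec 2 n →ₗ[ZMod 2] (Fin m → ZMod 2) where
  toFun := fun v => ∑ k, v k • f k
  map_add' := by intro v w; simp [add_smul, Finset.sum_add_distrib]
  map_smul' := by intro c v; simp [mul_smul, Finset.smul_sum]

lemma theta_apply (m n : ℕ) (f : Fin (n+1) → (Fin m → ZMod 2)) (v : GFVec 2 n) :
    theta m n f v = ∑ k, v k • f k := rfl

lemma theta_single (m n : ℕ) (f : Fin (n+1) → (Fin m → ZMod 2)) (a : Fin (n+1)) :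
    theta m n f (Pi.single a (1 : ZMod 2)) = f a := by
  rw [theta_apply, Finset.sum_eq_single a]
  · simp
  · intro k _ hk; simp [Pi.single_eq_of_ne hk]
  · simp

lemma zmod2_ne_zero {c : ZMod 2} (h : c ≠ 0) : c = 1 := by revert h; revert c; decide

lemma zmod2_add_eq_zero {c d : ZMod 2} (h : c + d = 0) : c = d := by
  revert h; revert c d; decide

end MyAux2


/-- for every odd `m ≥ 3`, with `n = m(m+1)/2`, there is a subgroup
`K` of `H = (Z_2)^{n+1}/⟨(1,…,1)⟩` with `H/K ≅ (Z_2)^m` avoiding all nontrivial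
`φ_k` and `φ_iφ_j`. -/
theorem stmt_9 (m n : ℕ) (hm : 3 ≤ m) (hodd : Odd m)
    (hn : 2 * n = m * (m + 1)) :
    ∃ K : AddSubgroup (GFGroup 2 n),
      Nonempty ((GFGroup 2 n ⧸ K) ≃+ (Fin m → ZMod 2)) ∧
      ∀ x ∈ K, IsForbidden 2 n 2 x → x = 0 := by
  obtain ⟨q, hq⟩ := id hodd
  -- cardinalities
  have hdvd : m * (m - 1) = 2 * (m * q) := by
    have h1 : m - 1 = 2 * q := by omega
    rw [h1]; ring
  have hc2 : 2 * m.choose 2 = m * (m - 1) := by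
    rw [Nat.choose_two_right]
    exact Nat.mul_div_cancel' ⟨m * q, hdvd⟩
  have hx : m * (m + 1) = m * (m - 1) + 2 * m := by
    have h2 : m - 1 + 2 = m + 1 := by omega
    rw [← h2]; ring
  have hpc : (pairsP m).card = m.choose 2 := by
    simp [pairsP, Finset.card_powersetCard]
  have hcardT : Fintype.card (IdxT m) = n + 1 := by
    simp only [Fintype.card_sum, Fintype.card_fin, Fintype.card_coe, hpc,
      Fintype.card_unit]
    omega
  set E : IdxT m ≃ Fin (n+1) := Fintype.equivFinOfCardEq hcardT with hE
  set f : Fin (n+1) → (Fin m → ZMod 2) := fun k => chi m (g0 m (E.symm k)) with hf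
  have hf_inj : Function.Injective f :=
    (chi_inj m).comp ((g0_inj m hm).comp E.symm.injective)
  haveI : Nonempty (Fin m) := ⟨⟨0, by omega⟩⟩
  have hg0ne : ∀ x : IdxT m, (g0 m x).Nonempty := by
    rintro ((i | s) | u)
    · exact ⟨i, Finset.mem_singleton_self i⟩
    · refine Finset.card_pos.mp ?_
      show 0 < (s.1).card
      rw [card_of_mem_pairsP s.2]; norm_num
    · exact Finset.univ_nonempty
  have hf_ne : ∀ k, f k ≠ 0 := fun k => chi_ne_zero m (hg0ne _)
  set θ := theta m n f with hθ
  have hθdiag : θ (fun _ => (1 : ZMod 2)) = 0 := by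
    rw [theta_apply]
    simp only [one_smul, hf]
    rw [Equiv.sum_comp E.symm (fun x => chi m (g0 m x))]
    exact sum_chi m hm hodd
  have h0 : ∀ v ∈ diagSub 2 n, θ.toAddMonoidHom v = 0 := by
    intro v hv
    obtain ⟨k, hk⟩ := AddSubgroup.mem_zmultiples_iff.mp hv
    rw [← hk, map_zsmul]
    show k • θ (fun _ => (1 : ZMod 2)) = 0
    rw [hθdiag, smul_zero]
  set θbar : GFGroup 2 n →+ (Fin m → ZMod 2) :=
    QuotientAddGroup.lift (diagSub 2 n) θ.toAddMonoidHom h0 with hθbar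
  have hθbar_mk : ∀ v : GFVec 2 n, θbar (QuotientAddGroup.mk v) = θ v := fun v => rfl
  -- surjectivity
  have hθsurj : Function.Surjective θ := by
    intro v
    refine ⟨∑ j : Fin m, v j • Pi.single (E (.inl (.inl j))) (1 : ZMod 2), ?_⟩
    rw [map_sum]
    have step : ∀ j : Fin m, θ (v j • Pi.single (E (.inl (.inl j))) (1 : ZMod 2))
        = v j • chi m {j} := by
      intro j
      rw [map_smul, hθ, theta_single]
      congr 1
      simp [hf, g0]
    rw [Finset.sum_congr rfl (fun j _ => step j)]
    ext i
    rw [Finset.sum_apply]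
    have step2 : ∀ j : Fin m, (v j • chi m {j}) i = if i = j then v j else 0 := by
      intro j
      by_cases h : i = j <;> simp [chi, h]
    rw [Finset.sum_congr rfl (fun j _ => step2 j), Finset.sum_ite_eq Finset.univ i v]
    simp
  have hbar_surj : Function.Surjective θbar := by
    intro v
    obtain ⟨w, hw⟩ := hθsurj v
    exact ⟨QuotientAddGroup.mk w, by rw [hθbar_mk, hw]⟩
  refine ⟨θbar.ker, ⟨QuotientAddGroup.quotientKerEquivOfSurjective θbar hbar_surj⟩, ?_⟩
  rintro x hx ⟨s, l, hsne, hscard, hl, rfl⟩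
  have hθx : θ (fun i => if i ∈ s then l i else 0) = 0 := by
    rw [← hθbar_mk]; exact AddMonoidHom.mem_ker.mp hx
  have hsum : ∑ k ∈ s, f k = 0 := by
    rw [theta_apply] at hθx
    have e1 : ∀ k : Fin (n+1),
        (if k ∈ s then l k else 0) • f k = if k ∈ s then f k else 0 := by
      intro k
      by_cases h : k ∈ s
      · rw [if_pos h, if_pos h, zmod2_ne_zero (hl k h), one_smul]
      · rw [if_neg h, if_neg h, zero_smul]
    rw [Finset.sum_congr rfl (fun k _ => e1 k), Finset.sum_ite_mem,
      Finset.univ_inter] at hθx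
    exact hθx
  exfalso
  have hcases : s.card = 1 ∨ s.card = 2 := by
    have := hsne.card_pos; omega
  rcases hcases with h1 | h2
  · obtain ⟨a, rfl⟩ := Finset.card_eq_one.mp h1
    rw [Finset.sum_singleton] at hsum
    exact hf_ne a hsum
  · obtain ⟨a, b, hab, rfl⟩ := Finset.card_eq_two.mp h2
    rw [Finset.sum_pair hab] at hsum
    have : f a = f b := by
      ext i
      exact zmod2_add_eq_zero (by simpa using congrFun hsum i)
    exact hab (hf_inj this)
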